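/- (End-to-end correctness of the S2PVC protocol.) Let G be a commutative group and g an element of G of finite order q. With the MI-FEIP setup of n parties with input lengths η : Fin n → ℕ, master secrets a : Fin 2 → ℤ, W_i (η_i × 2 integer matrices), u_i : Fin η_i → ℤ, per-party randomness r_i : ℤ, party inputs x_i : Fin η_i → ℤ and server weight partition y_i : Fin η_i → ℤ, let the ciphertexts be t_{i,ℓ} = g^{a_ℓ · r_i} and c_{i,j} = g^{x_{i,j}} · g^{u_{i,j}} · g^{(∑_ℓ W_{i,j,ℓ} · a_ℓ) · r_i}, and the functional key components d_{i,ℓ} = ∑_j y_{i,j} · W_{i,j,ℓ} and z = ∑_i ∑_j y_{i,j} · u_{i,j}. Suppose f_b is a natural number with 2·f_b < q and |∑_i ∑_j y_{i,j} · x_{i,j}| ≤ f_b. Then ∑_i ∑_j y_{i,j} · x_{i,j} is the unique integer f with |f| ≤ f_b satisfying g^f = (∏_i (∏_j c_{i,j}^{y_{i,j}}) · (∏_ℓ t_{i,ℓ}^{d_{i,ℓ}})^{−1}) · g^{−z}. Hence the server recovers exactly the inner product of the vertically concatenated client data (x_1 ‖ ... ‖ x_n) with its weight vector y = (y_1 ‖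 ... ‖ y_n). -/
import Mathlib

lemma prod_g_zpow {G : Type*} [CommGroup G] (g : G) {ι : Type*} (s : Finset ι)
    (f : ι → ℤ) : ∏ i ∈ s, g ^ f i = g ^ ∑ i ∈ s, f i := by
  induction s using Finset.cons_induction with
  | empty => simp
  | cons i s hi ih => rw [Finset.prod_cons, Finset.sum_cons, ih, zpow_add]

/-- End-to-end correctness of the S2PVC protocol: with the MI-FEIP ciphertexts
of the parties' sub-vectors and the functional key for the server's weight
partition, the multi-input inner product `∑ i ∑ j y_{i,j}·x_{i,j}` is the
unique integer `f` with `|f| ≤ f_b` matching the decryption expression,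
provided `2·f_b` is less than the order of `g` and the inner product is
bounded by `f_b`. -/
theorem s2pvc_correct
    {G : Type*} [CommGroup G] (g : G) (q : ℕ) (hq : orderOf g = q)
    (n : ℕ) (η : Fin n → ℕ)
    (a : Fin 2 → ℤ)
    (W : (i : Fin n) → Fin (η i) → Fin 2 → ℤ)
    (u x y : (i : Fin n) → Fin (η i) → ℤ)
    (r : Fin n → ℤ)
    (f_b : ℕ) (hfb : 2 * f_b < q)
    (hbound : |∑ i, ∑ j, y i j * x i j| ≤ (f_b : ℤ)) :
    ∀ f : ℤ,
      (|f| ≤ (f_b : ℤ) ∧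
        g ^ f =
          (∏ i, (∏ j, (g ^ x i j * g ^ u i j *
                  g ^ ((∑ ℓ, W i j ℓ * a ℓ) * r i)) ^ y i j) *
                (∏ ℓ, (g ^ (a ℓ * r i)) ^ (∑ j, y i j * W i j ℓ))⁻¹) *
              g ^ (-(∑ i, ∑ j, y i j * u i j))) ↔
      f = ∑ i, ∑ j, y i j * x i j := by
  intro f
  set S : ℤ := ∑ i, ∑ j, y i j * x i j with hS
  have hrhs :
      (∏ i, (∏ j, (g ^ x i j * g ^ u i j *
              g ^ ((∑ ℓ, W i j ℓ * a ℓ) * r i)) ^ y i j) *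
            (∏ ℓ, (g ^ (a ℓ * r i)) ^ (∑ j, y i j * W i j ℓ))⁻¹) *
          g ^ (-(∑ i, ∑ j, y i j * u i j)) = g ^ S := by
    have h1 : ∀ i : Fin n,
        (∏ j, (g ^ x i j * g ^ u i j *
              g ^ ((∑ ℓ, W i j ℓ * a ℓ) * r i)) ^ y i j) *
            (∏ ℓ, (g ^ (a ℓ * r i)) ^ (∑ j, y i j * W i j ℓ))⁻¹
          = g ^ (∑ j, y i j * (x i j + u i j)) := by
      intro i
      have e1 : ∏ j, (g ^ x i j * g ^ u i j *
              g ^ ((∑ ℓ, W i j ℓ * a ℓ) * r i)) ^ y i j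
          = g ^ (∑ j, (x i j + u i j + (∑ ℓ, W i j ℓ * a ℓ) * r i) * y i j) := by
        rw [← prod_g_zpow]
        refine Finset.prod_congr rfl fun j _ => ?_
        rw [← zpow_add, ← zpow_add, ← zpow_mul]
      have e2 : ∏ ℓ, (g ^ (a ℓ * r i)) ^ (∑ j, y i j * W i j ℓ)
          = g ^ (∑ ℓ, a ℓ * r i * ∑ j, y i j * W i j ℓ) := by
        rw [← prod_g_zpow]
        refine Finset.prod_congr rfl fun ℓ _ => ?_
        rw [← zpow_mul]
      rw [e1, e2, ← zpow_neg, ← zpow_add]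
      congr 1
      have hswap : ∑ ℓ, a ℓ * r i * ∑ j, y i j * W i j ℓ
          = ∑ j, (∑ ℓ, W i j ℓ * a ℓ) * r i * y i j := by
        simp only [Finset.mul_sum]
        rw [Finset.sum_comm]
        refine Finset.sum_congr rfl fun j _ => ?_
        rw [Finset.sum_mul, Finset.sum_mul]
        exact Finset.sum_congr rfl fun ℓ _ => by ring
      rw [hswap, ← Finset.sum_neg_distrib, ← Finset.sum_add_distrib]
      refine Finset.sum_congr rfl fun j _ => by ring
    calc (∏ i, (∏ j, (g ^ x i j * g ^ u i j *
              g ^ ((∑ ℓ, W i j ℓ * a ℓ) * r i)) ^ y i j) *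
            (∏ ℓ, (g ^ (a ℓ * r i)) ^ (∑ j, y i j * W i j ℓ))⁻¹) *
          g ^ (-(∑ i, ∑ j, y i j * u i j))
        = (∏ i, g ^ (∑ j, y i j * (x i j + u i j))) *
          g ^ (-(∑ i, ∑ j, y i j * u i j)) := by
          rw [Finset.prod_congr rfl fun i _ => h1 i]
      _ = g ^ S := by
          rw [prod_g_zpow, ← zpow_add]
          congr 1
          simp only [hS, mul_add, Finset.sum_add_distrib]
          ring
  rw [hrhs]
  constructor
  · rintro ⟨hf, heq⟩
    have h1 : g ^ (f - S) = 1 := by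
      rw [zpow_sub, heq, mul_inv_cancel]
    have hdvd : (q : ℤ) ∣ f - S := by
      rw [← hq]; exact orderOf_dvd_iff_zpow_eq_one.mpr h1
    exact sub_eq_zero.mp (by
      refine Int.eq_zero_of_abs_lt_dvd hdvd ?_
      calc |f - S| ≤ |f| + |S| := abs_sub f S
        _ ≤ (f_b : ℤ) + f_b := add_le_add hf hbound
        _ < q := by omega)
  · rintro rfl
    exact ⟨hbound, rfl⟩
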